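/- Let α > 0 and let H be a finite simple graph whose vertex set is partitioned as V_T ∪ V_A such that: (i) the induced subgraph of H on V_T is a tree; letting L be the set of leaves of this tree (vertices of degree 1 in the tree) and I = V_T \ L, every vertex of I has degree at least 3 in the tree, except at most one vertex which has degree 2; (ii) the induced subgraph of H on V_A has maximum degree at most 3 and edge expansion at least α; (iii) the set of edges of H with one endpoint in V_T and the other in V_A forms a perfect matching between L and V_A (in particular |L| = |V_A|), and H has no other edges. Then the edge expansion of H is at least 0.01·α. -/

import Mathlib

open SimpleGraph

section AuxLemmas
open Finset

variable {V : Type*} [Fintype V]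

lemma pair_count (A B : Set V) (R : V → V → Prop) :
    {e : V × V | e.1 ∈ A ∧ e.2 ∈ B ∧ R e.1 e.2}.ncard
      = ∑ v ∈ (Set.toFinite A).toFinset, {u | u ∈ B ∧ R v u}.ncard := by
  classical
  have h1 : {e : V × V | e.1 ∈ A ∧ e.2 ∈ B ∧ R e.1 e.2}
      = ↑((Set.toFinite A).toFinset.biUnion
        (fun v => ((Set.toFinite {u | u ∈ B ∧ R v u}).toFinset).image (fun u => (v, u)))) := by
    ext ⟨a, b⟩
    simp [Set.Finite.mem_toFinset]
    aesop
  rw [h1, Set.ncard_coe_finset, Finset.card_biUnion]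
  · refine Finset.sum_congr rfl fun v hv => ?_
    rw [Finset.card_image_of_injective _ (fun x y h => by simpa using congrArg Prod.snd h)]
    rw [Set.ncard_eq_toFinset_card]
  · intro x hx y hy hxy
    simp only [Finset.disjoint_left]
    intro e he he'
    simp only [Finset.mem_image] at he he'
    obtain ⟨u, _, rfl⟩ := he
    obtain ⟨u', _, h⟩ := he'
    exact hxy (by simpa using (congrArg Prod.fst h).symm)

lemma tree_pair_bound {W : Type*} [Fintype W] (G : SimpleGraph W) (hG : G.IsTree)
    (A : Set W) (hA : A.Nonempty) :
    {e : W × W | e.1 ∈ A ∧ e.2 ∈ A ∧ G.Adj e.1 e.2}.ncard + 2 ≤ 2 * A.ncard := by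
  classical
  obtain ⟨r, hr⟩ := hA
  choose f hf hf' using (hG.existsUnique_path · r)
  set P : W → W → Prop := fun u v => s(u,v) ∈ (f u).edges with hP
  have claim2 : ∀ u v (h : G.Adj u v), P u v → ∃ (q : G.Walk v r), f u = Walk.cons h q := by
    intro u v h hPuv
    cases hq : f u with
    | nil => rw [hP] at hPuv; simp only [hq, Walk.edges_nil, List.not_mem_nil] at hPuv
    | cons h' q =>
      have hpath := hf u
      rw [hq, Walk.cons_isPath_iff] at hpath
      rw [hP] at hPuv
      simp only [hq, Walk.edges_cons, List.mem_cons] at hPuv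
      rcases hPuv with heq | hmem
      · rw [Sym2.eq_iff] at heq
        rcases heq with ⟨-, rfl⟩ | ⟨rfl, rfl⟩
        · exact ⟨q, rfl⟩
        · exact absurd rfl h'.ne
      · exact absurd (Walk.fst_mem_support_of_mem_edges q hmem) hpath.2
  have claim1 : ∀ u v, G.Adj u v → P u v ∨ P v u := by
    intro u v h
    have hb := (isAcyclic_iff_forall_adj_isBridge.mp hG.IsAcyclic) h
    rw [isBridge_iff_adj_and_forall_walk_mem_edges] at hb
    have hm := hb ((f u).append (f v).reverse)
    rw [Walk.edges_append, List.mem_append, Walk.edges_reverse, List.mem_reverse] at hm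
    rcases hm with hm | hm
    · exact Or.inl hm
    · right; rw [hP]; rwa [Sym2.eq_swap] at hm
  have claim3 : ∀ u v (h : G.Adj u v), P u v → P v u → False := by
    intro u v h h1 h2
    obtain ⟨q, hq⟩ := claim2 u v h h1
    obtain ⟨q', hq'⟩ := claim2 v u h.symm h2
    have hqp : q.IsPath := by
      have := hf u; rw [hq, Walk.cons_isPath_iff] at this; exact this.1
    have hq'p : q'.IsPath := by
      have := hf v; rw [hq', Walk.cons_isPath_iff] at this; exact this.1
    have e1 : q = f v := hf' v q hqp
    have e2 : q' = f u := hf' u q' hq'p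
    have l1 := congrArg Walk.length hq
    have l2 := congrArg Walk.length hq'
    rw [Walk.length_cons, e1] at l1
    rw [Walk.length_cons, e2] at l2
    omega
  have claim4 : ∀ v, ¬ P r v := by
    intro v hv
    have hnil : f r = Walk.nil := Walk.isPath_iff_eq_nil.mp (hf r)
    rw [hP] at hv
    simp only [hnil, Walk.edges_nil, List.not_mem_nil] at hv
  have claim5 : ∀ u v v' (h : G.Adj u v) (h' : G.Adj u v'), P u v → P u v' → v = v' := by
    intro u v v' h h' h1 h2
    obtain ⟨q, hq⟩ := claim2 u v h h1
    obtain ⟨q', hq'⟩ := claim2 u v' h' h2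
    have e : Walk.cons h q = Walk.cons h' q' := by rw [← hq, ← hq']
    have hs := congrArg Walk.support e
    rw [Walk.support_cons, Walk.support_cons] at hs
    have hs2 := (List.cons_eq_cons.mp hs).2
    rw [q.support_eq_cons, q'.support_eq_cons] at hs2
    exact (List.cons_eq_cons.mp hs2).1
  -- the counting
  set D := ((Set.toFinite A).toFinset ×ˢ (Set.toFinite A).toFinset).filter
      (fun e => G.Adj e.1 e.2) with hD
  have hcardD : {e : W × W | e.1 ∈ A ∧ e.2 ∈ A ∧ G.Adj e.1 e.2}.ncard = D.card := by
    rw [Set.ncard_eq_toFinset_card]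
    congr 1
    ext ⟨a, b⟩
    simp [hD, Set.Finite.mem_toFinset, and_assoc]
  set φ : W × W → W × Bool := fun e => if P e.1 e.2 then (e.1, true) else (e.2, false) with hφ
  have hmaps : ∀ e ∈ D, φ e ∈ (((Set.toFinite A).toFinset.erase r) ×ˢ (Finset.univ : Finset Bool)) := by
    rintro ⟨u, v⟩ he
    simp only [hD, Finset.mem_filter, Finset.mem_product, Set.Finite.mem_toFinset] at he
    obtain ⟨⟨hu, hv⟩, hadj⟩ := he
    simp only [hφ]
    by_cases hp : P u v
    · rw [if_pos hp]
      simp only [Finset.mem_product, Finset.mem_erase, Set.Finite.mem_toFinset]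
      refine ⟨⟨?_, hu⟩, Finset.mem_univ _⟩
      rintro rfl; exact claim4 v hp
    · rw [if_neg hp]
      have hpv : P v u := (claim1 u v hadj).resolve_left hp
      simp only [Finset.mem_product, Finset.mem_erase, Set.Finite.mem_toFinset]
      refine ⟨⟨?_, hv⟩, Finset.mem_univ _⟩
      rintro rfl; exact claim4 u hpv
  have hinj : Set.InjOn φ ↑D := by
    rintro ⟨u, v⟩ he ⟨u', v'⟩ he' heq
    simp only [hD, Finset.coe_filter, Set.mem_setOf_eq, Finset.mem_product,
      Set.Finite.mem_toFinset] at he he'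
    obtain ⟨⟨hu, hv⟩, hadj⟩ := he
    obtain ⟨⟨hu', hv'⟩, hadj'⟩ := he'
    simp only [hφ] at heq
    by_cases hp : P u v <;> by_cases hp' : P u' v'
    · rw [if_pos hp, if_pos hp'] at heq
      have h1 : u = u' := congrArg Prod.fst heq
      subst h1
      have h2 := claim5 u v v' hadj hadj' hp hp'
      rw [h2]
    · rw [if_pos hp, if_neg hp'] at heq
      simp at heq
    · rw [if_neg hp, if_pos hp'] at heq
      simp at heq
    · rw [if_neg hp, if_neg hp'] at heq
      have hpv : P v u := (claim1 u v hadj).resolve_left hp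
      have hpv' : P v' u' := (claim1 u' v' hadj').resolve_left hp'
      have h1 : v = v' := congrArg Prod.fst heq
      subst h1
      have h2 := claim5 v u u' hadj.symm hadj'.symm hpv hpv'
      rw [h2]
  have hle := Finset.card_le_card_of_injOn φ hmaps hinj
  rw [Finset.card_product, Finset.card_erase_of_mem (by simpa [Set.Finite.mem_toFinset] using hr),
    Finset.card_univ, Fintype.card_bool] at hle
  have hA1 : 0 < A.ncard := (Set.ncard_pos (Set.toFinite A)).mpr ⟨r, hr⟩
  have hAc : (Set.toFinite A).toFinset.card = A.ncard := (Set.ncard_eq_toFinset_card _ _).symm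
  rw [hAc] at hle
  rw [hcardD]
  omega

variable {V : Type*} [Fintype V]

lemma tree_pair_bound2 (H : SimpleGraph V) (VT : Set V)
    (htree : (H.induce VT).IsTree) (A : Set V) (hA : A.Nonempty) (hAsub : A ⊆ VT) :
    {e : V × V | e.1 ∈ A ∧ e.2 ∈ A ∧ H.Adj e.1 e.2}.ncard + 2 ≤ 2 * A.ncard := by
  classical
  set A' : Set ↥VT := Subtype.val ⁻¹' A with hA'
  have hA'ne : A'.Nonempty := ⟨⟨hA.choose, hAsub hA.choose_spec⟩, hA.choose_spec⟩
  have h1 := tree_pair_bound (H.induce VT) htree A' hA'ne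
  have hinj : Function.Injective (fun e : ↥VT × ↥VT => ((e.1 : V), (e.2 : V))) := by
    rintro ⟨a, b⟩ ⟨c, d⟩ h
    simp only [Prod.mk.injEq] at h
    obtain ⟨h1, h2⟩ := h
    cases Subtype.ext h1; cases Subtype.ext h2; rfl
  have h2 : (fun e : ↥VT × ↥VT => ((e.1 : V), (e.2 : V))) ''
      {e : ↥VT × ↥VT | e.1 ∈ A' ∧ e.2 ∈ A' ∧ (H.induce VT).Adj e.1 e.2}
      = {e : V × V | e.1 ∈ A ∧ e.2 ∈ A ∧ H.Adj e.1 e.2} := by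
    ext ⟨a, b⟩
    constructor
    · rintro ⟨⟨x, y⟩, ⟨hx, hy, hadj⟩, heq⟩
      simp only [Prod.mk.injEq] at heq
      obtain ⟨h1, h2⟩ := heq
      subst h1; subst h2
      exact ⟨hx, hy, hadj⟩
    · rintro ⟨ha, hb, hadj⟩
      exact ⟨(⟨a, hAsub ha⟩, ⟨b, hAsub hb⟩), ⟨ha, hb, hadj⟩, rfl⟩
  have h3 : Subtype.val '' A' = A := by
    ext u
    simp only [hA', Set.mem_image, Set.mem_preimage]
    constructor
    · rintro ⟨⟨y, hy⟩, hy2, rfl⟩; exact hy2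
    · intro hu; exact ⟨⟨u, hAsub hu⟩, hu, rfl⟩
  rw [← h2, Set.ncard_image_of_injective _ hinj, ← h3, Set.ncard_image_of_injective _ Subtype.val_injective]
  exact h1

lemma tree_degree_sum (H : SimpleGraph V) (VT : Set V)
    (htree : (H.induce VT).IsTree) :
    (∑ v ∈ (Set.toFinite VT).toFinset, {u | u ∈ VT ∧ H.Adj v u}.ncard) + 2 = 2 * VT.ncard := by
  classical
  set G := H.induce VT with hG
  letI : Fintype ↥VT := (Set.toFinite VT).fintype
  letI : DecidableRel G.Adj := Classical.decRel _
  have hhs := G.sum_degrees_eq_twice_card_edges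
  have htree' := htree.card_edgeFinset
  have hdeg : ∀ v : ↥VT, G.degree v = {u | u ∈ VT ∧ H.Adj ↑v u}.ncard := by
    intro v
    have himg : Subtype.val '' (G.neighborSet v) = {u | u ∈ VT ∧ H.Adj ↑v u} := by
      ext u
      constructor
      · rintro ⟨⟨y, hy⟩, hadj, rfl⟩; exact ⟨hy, hadj⟩
      · rintro ⟨hu, hadj⟩; exact ⟨⟨u, hu⟩, hadj, rfl⟩
    rw [← himg, Set.ncard_image_of_injective _ Subtype.val_injective]
    rw [← SimpleGraph.card_neighborSet_eq_degree, Set.ncard_eq_toFinset_card', Set.toFinset_card]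
  have hsum : ∑ v ∈ (Set.toFinite VT).toFinset, {u | u ∈ VT ∧ H.Adj v u}.ncard
      = ∑ v : ↥VT, G.degree v := by
    rw [Finset.sum_subtype (Set.toFinite VT).toFinset
      (fun x => (Set.toFinite VT).mem_toFinset) (fun v => {u | u ∈ VT ∧ H.Adj v u}.ncard)]
    exact Finset.sum_congr rfl fun v _ => (hdeg v).symm
  have hcard : Fintype.card ↥VT = VT.ncard := by
    rw [Set.ncard_eq_toFinset_card', Set.toFinset_card]
  rw [hsum, hhs]
  omega

end AuxLemmas


/-- The tree-plus-matching-plus-expander graph is an expander: if the vertex set of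
`H` is partitioned into `VT ∪ VA` where (i) `H` induces a tree on `VT` whose internal
vertices all have degree at least 3 except at most one of degree 2, (ii) `H` induces
on `VA` a graph of maximum degree at most 3 and edge expansion at least `α`, and
(iii) the cross edges form a perfect matching between the leaves `L` of the tree and
`VA` (and there are no other edges), then `H` has edge expansion at least `0.01·α`. -/
theorem tree_matching_expander_is_expander {V : Type*} [Fintype V]
    (H : SimpleGraph V) (α : ℝ) (hα : 0 < α)
    (VT VA : Set V) (hpart : VT ∪ VA = Set.univ) (hdisj : Disjoint VT VA)
    -- (i) the induced subgraph on `VT` is a tree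
    (htree : (H.induce VT).IsTree)
    -- `L` = leaves of the tree, `I` = internal vertices of the tree
    (L I : Set V)
    (hL : L = {v | v ∈ VT ∧ Set.ncard {u | u ∈ VT ∧ H.Adj v u} = 1})
    (hI : I = VT \ L)
    -- every internal vertex has tree-degree ≥ 3, except at most one of degree 2
    (hdeg : (∀ v ∈ I, 3 ≤ Set.ncard {u | u ∈ VT ∧ H.Adj v u}) ∨
      (∃ v₀ ∈ I, Set.ncard {u | u ∈ VT ∧ H.Adj v₀ u} = 2 ∧
        ∀ v ∈ I, v ≠ v₀ → 3 ≤ Set.ncard {u | u ∈ VT ∧ H.Adj v u}))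
    -- (ii) the induced subgraph on `VA` has maximum degree at most 3 ...
    (hAdeg : ∀ v ∈ VA, Set.ncard {u | u ∈ VA ∧ H.Adj v u} ≤ 3)
    -- ... and edge expansion at least `α`
    (hAexp : ∀ S : Set V, S ⊆ VA → S.Nonempty → 2 * S.ncard ≤ VA.ncard →
      α * (S.ncard : ℝ) ≤
        (Set.ncard {e : V × V | e.1 ∈ S ∧ e.2 ∈ VA \ S ∧ H.Adj e.1 e.2} : ℝ))
    -- (iii) the cross edges form a perfect matching between `L` and `VA`
    (hcross : ∀ u ∈ VT, ∀ w ∈ VA, H.Adj u w → u ∈ L)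
    (hmatch1 : ∀ u ∈ L, ∃! w, w ∈ VA ∧ H.Adj u w)
    (hmatch2 : ∀ w ∈ VA, ∃! u, u ∈ L ∧ H.Adj u w) :
    -- conclusion: `H` has edge expansion at least `0.01·α`
    ∀ S : Set V, S.Nonempty → 2 * S.ncard ≤ Fintype.card V →
      0.01 * α * (S.ncard : ℝ) ≤
        (Set.ncard {e : V × V | e.1 ∈ S ∧ e.2 ∉ S ∧ H.Adj e.1 e.2} : ℝ) := by
  classical
  have hLsub : L ⊆ VT := by rw [hL]; rintro v ⟨h1, -⟩; exact h1
  have hIsub : I ⊆ VT := by rw [hI]; exact Set.diff_subset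
  -- matching function
  have hm0 : ∀ u, ∃ w, u ∈ L → ((w ∈ VA ∧ H.Adj u w) ∧ ∀ y, y ∈ VA ∧ H.Adj u y → y = w) := by
    intro u
    by_cases hu : u ∈ L
    · obtain ⟨w, hw1, hw2⟩ := hmatch1 u hu
      exact ⟨w, fun _ => ⟨hw1, hw2⟩⟩
    · exact ⟨u, fun h => absurd h hu⟩
  choose m hm using hm0
  have hmVA : ∀ u ∈ L, m u ∈ VA := fun u hu => ((hm u hu).1).1
  have hmAdj : ∀ u ∈ L, H.Adj u (m u) := fun u hu => ((hm u hu).1).2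
  have hmuniq : ∀ u ∈ L, ∀ y, y ∈ VA → H.Adj u y → y = m u :=
    fun u hu y hy hadj => (hm u hu).2 y ⟨hy, hadj⟩
  have hminj : Set.InjOn m L := by
    intro u hu u' hu' heq
    obtain ⟨u'', -, hu''⟩ := hmatch2 (m u) (hmVA u hu)
    have e1 : u = u'' := hu'' u ⟨hu, hmAdj u hu⟩
    have e2 : u' = u'' := hu'' u' ⟨hu', heq ▸ hmAdj u' hu'⟩
    rw [e1, e2]
  have hmimg : m '' L = VA := by
    apply Set.Subset.antisymm
    · rintro w ⟨u, hu, rfl⟩; exact hmVA u hu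
    · intro w hw
      obtain ⟨u, ⟨hu1, hu2⟩, -⟩ := hmatch2 w hw
      exact ⟨u, hu1, (hmuniq u hu1 w hw hu2).symm⟩
  have hLVA : L.ncard = VA.ncard := by rw [← hmimg, Set.ncard_image_of_injOn hminj]
  have hLI : Disjoint L I := by rw [hI]; exact Set.disjoint_sdiff_right
  have hVTLI : VT = L ∪ I := by rw [hI, Set.union_diff_cancel hLsub]
  -- leaf degree
  have hleaf1 : ∀ v ∈ L, {u | u ∈ VT ∧ H.Adj v u}.ncard = 1 := by
    intro v hv
    have : v ∈ {v | v ∈ VT ∧ Set.ncard {u | u ∈ VT ∧ H.Adj v u} = 1} := hL ▸ hv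
    exact this.2
  -- sum of degrees over leaves
  have hsumleaf : ∀ J : Set V, J ⊆ L →
      (∑ v ∈ (Set.toFinite J).toFinset, {u | u ∈ VT ∧ H.Adj v u}.ncard) = J.ncard := by
    intro J hJ
    rw [Set.ncard_eq_toFinset_card J, Finset.card_eq_sum_ones]
    refine Finset.sum_congr rfl fun v hv => ?_
    exact hleaf1 v (hJ ((Set.toFinite J).mem_toFinset.mp hv))
  -- sum of degrees over internal vertices
  have hIdeg : ∀ J : Set V, J ⊆ I →
      3 * J.ncard ≤ (∑ v ∈ (Set.toFinite J).toFinset, {u | u ∈ VT ∧ H.Adj v u}.ncard) + 1 := by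
    intro J hJ
    have hc : (Set.toFinite J).toFinset.card = J.ncard := (Set.ncard_eq_toFinset_card _ _).symm
    rcases hdeg with hall | ⟨v₀, hv₀I, hv₀2, hrest⟩
    · have h0 : ∀ v ∈ (Set.toFinite J).toFinset, 3 ≤ {u | u ∈ VT ∧ H.Adj v u}.ncard :=
        fun v hv => hall v (hJ ((Set.toFinite J).mem_toFinset.mp hv))
      have h3 := Finset.card_nsmul_le_sum _ _ 3 h0
      simp only [smul_eq_mul] at h3
      omega
    · by_cases hv₀J : v₀ ∈ J
      · have hmem := (Set.toFinite J).mem_toFinset.mpr hv₀J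
        have herase := Finset.add_sum_erase (Set.toFinite J).toFinset
          (fun v => {u | u ∈ VT ∧ H.Adj v u}.ncard) hmem
        have hrest' : ∀ v ∈ ((Set.toFinite J).toFinset.erase v₀),
            3 ≤ {u | u ∈ VT ∧ H.Adj v u}.ncard := by
          intro v hv
          obtain ⟨hne, hvJ⟩ := Finset.mem_erase.mp hv
          exact hrest v (hJ ((Set.toFinite J).mem_toFinset.mp hvJ)) hne
        have h3 := Finset.card_nsmul_le_sum _ _ 3 hrest'
        simp only [smul_eq_mul] at h3
        rw [Finset.card_erase_of_mem hmem] at h3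
        have hcpos : 0 < (Set.toFinite J).toFinset.card := Finset.card_pos.mpr ⟨v₀, hmem⟩
        simp only [hv₀2] at herase
        omega
      · have h0 : ∀ v ∈ (Set.toFinite J).toFinset, 3 ≤ {u | u ∈ VT ∧ H.Adj v u}.ncard := by
          intro v hv
          have hvJ := (Set.toFinite J).mem_toFinset.mp hv
          exact hrest v (hJ hvJ) (fun h => hv₀J (h ▸ hvJ))
        have h3 := Finset.card_nsmul_le_sum _ _ 3 h0
        simp only [smul_eq_mul] at h3
        omega
  -- global degree sum
  have hdsum := tree_degree_sum H VT htree
  have hsplitfin : (Set.toFinite VT).toFinset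
      = (Set.toFinite L).toFinset ∪ (Set.toFinite I).toFinset := by
    ext v
    simp only [Set.Finite.mem_toFinset, Finset.mem_union]
    rw [hVTLI]; exact Set.mem_union v L I
  have hdisjf : Disjoint (Set.toFinite L).toFinset (Set.toFinite I).toFinset := by
    rw [Finset.disjoint_left]
    intro v hv hv2
    rw [Set.Finite.mem_toFinset] at hv hv2
    exact Set.disjoint_left.mp hLI hv hv2
  have hVTcard : VT.ncard = L.ncard + I.ncard := by
    rw [hVTLI, Set.ncard_union_eq hLI]
  have hsplitsum : (∑ v ∈ (Set.toFinite VT).toFinset, {u | u ∈ VT ∧ H.Adj v u}.ncard)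
      = (∑ v ∈ (Set.toFinite L).toFinset, {u | u ∈ VT ∧ H.Adj v u}.ncard)
        + (∑ v ∈ (Set.toFinite I).toFinset, {u | u ∈ VT ∧ H.Adj v u}.ncard) := by
    rw [hsplitfin, Finset.sum_union hdisjf]
  have hsumL := hsumleaf L (subset_refl L)
  have hsumI := hIdeg I (subset_refl I)
  have hl2 : 2 ≤ L.ncard := by
    by_cases hIe : I = ∅
    · have h0 : (∑ v ∈ (Set.toFinite I).toFinset, {u | u ∈ VT ∧ H.Adj v u}.ncard) = 0 := by
        rw [Set.Finite.toFinset_eq_empty.mpr hIe, Finset.sum_empty]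
      rw [hIe, Set.ncard_empty] at hVTcard
      omega
    · have hi1 : 1 ≤ I.ncard :=
        (Set.ncard_pos (Set.toFinite I)).mpr (Set.nonempty_iff_ne_empty.mpr hIe)
      omega
  have ha2 : 2 ≤ VA.ncard := hLVA ▸ hl2
  -- α ≤ 3
  have hα3 : α ≤ 3 := by
    obtain ⟨v, hv⟩ : VA.Nonempty := (Set.ncard_pos (Set.toFinite VA)).mp (by omega)
    have hsing : ({v} : Set V).ncard = 1 := Set.ncard_singleton v
    have h1 := hAexp {v} (Set.singleton_subset_iff.mpr hv) (Set.singleton_nonempty v) (by omega)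
    rw [hsing] at h1
    have h2 : {e : V × V | e.1 ∈ ({v} : Set V) ∧ e.2 ∈ VA \ {v} ∧ H.Adj e.1 e.2}.ncard
        ≤ {u | u ∈ VA ∧ H.Adj v u}.ncard := by
      apply Set.ncard_le_ncard_of_injOn (fun e => e.2)
      · rintro ⟨a, b⟩ ⟨ha, hb, hadj⟩
        exact ⟨hb.1, (show a = v from ha) ▸ hadj⟩
      · rintro ⟨a, b⟩ ⟨ha, -, -⟩ ⟨a', b'⟩ ⟨ha', -, -⟩ h
        simp only at h
        rw [show a = v from ha, show a' = v from ha', h]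
    have h3 := h2.trans (hAdeg v hv)
    have h4 : ({e : V × V | e.1 ∈ ({v} : Set V) ∧ e.2 ∈ VA \ {v} ∧ H.Adj e.1 e.2}.ncard : ℝ)
        ≤ 3 := by exact_mod_cast Nat.cast_le.mpr h3
    rw [Nat.cast_one, mul_one] at h1
    linarith
  -- splitting of arbitrary sets along VT/VA
  have hsplitset : ∀ S' : Set V, S' = (S' ∩ VT) ∪ (S' ∩ VA) := by
    intro S'
    rw [← Set.inter_union_distrib_left, hpart, Set.inter_univ]
  have hdisjS : ∀ S' : Set V, Disjoint (S' ∩ VT) (S' ∩ VA) :=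
    fun S' => hdisj.mono Set.inter_subset_right Set.inter_subset_right
  have hsplitcard : ∀ S' : Set V, S'.ncard = (S' ∩ VT).ncard + (S' ∩ VA).ncard := by
    intro S'
    conv_lhs => rw [hsplitset S']
    rw [Set.ncard_union_eq (hdisjS S')]
  -- keyA
  have keyA : ∀ S' : Set V, 2 * (S' ∩ VA).ncard ≤ VA.ncard →
      α * ((S' ∩ VA).ncard : ℝ)
        ≤ ({e : V × V | e.1 ∈ S' ∧ e.2 ∉ S' ∧ H.Adj e.1 e.2}.ncard : ℝ) := by
    intro S' hcard
    by_cases hB : (S' ∩ VA) = ∅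
    · rw [hB, Set.ncard_empty]
      simp only [Nat.cast_zero, mul_zero]
      positivity
    · have h1 := hAexp (S' ∩ VA) Set.inter_subset_right
        (Set.nonempty_iff_ne_empty.mpr hB) hcard
      refine h1.trans ?_
      have hsub : {e : V × V | e.1 ∈ S' ∩ VA ∧ e.2 ∈ VA \ (S' ∩ VA) ∧ H.Adj e.1 e.2}
          ⊆ {e : V × V | e.1 ∈ S' ∧ e.2 ∉ S' ∧ H.Adj e.1 e.2} := by
        rintro ⟨a, b⟩ ⟨ha, hb, hadj⟩
        exact ⟨ha.1, fun hbS => hb.2 ⟨hbS, hb.1⟩, hadj⟩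
      exact_mod_cast Nat.cast_le.mpr (Set.ncard_le_ncard hsub (Set.toFinite _))
  -- keyT
  have keyT : ∀ S' : Set V, (S' ∩ VT).ncard
      ≤ 2 * {e : V × V | e.1 ∈ S' ∧ e.2 ∉ S' ∧ H.Adj e.1 e.2}.ncard + 2 * (S' ∩ VA).ncard := by
    intro S'
    by_cases hT : (S' ∩ VT) = ∅
    · rw [hT, Set.ncard_empty]; omega
    have hTne : (S' ∩ VT).Nonempty := Set.nonempty_iff_ne_empty.mpr hT
    set T' := S' ∩ VT with hT'
    set X := {e : V × V | e.1 ∈ S' ∧ e.2 ∉ S' ∧ H.Adj e.1 e.2} with hX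
    set XT := {e : V × V | (e.1 ∈ S' ∧ e.2 ∉ S' ∧ H.Adj e.1 e.2) ∧ e.1 ∈ VT ∧ e.2 ∈ VT} with hXT
    set XM := {e : V × V | (e.1 ∈ S' ∧ e.2 ∉ S' ∧ H.Adj e.1 e.2) ∧ e.2 ∈ VA} with hXM
    -- XT, XM disjoint subsets of X
    have hXTM : XT.ncard + XM.ncard ≤ X.ncard := by
      have hd : Disjoint XT XM := by
        rw [Set.disjoint_left]
        rintro e ⟨-, -, h2⟩ ⟨-, h4⟩
        exact Set.disjoint_left.mp hdisj h2 h4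
      rw [← Set.ncard_union_eq hd (Set.toFinite _) (Set.toFinite _)]
      refine Set.ncard_le_ncard ?_ (Set.toFinite _)
      rintro e (he | he)
      · exact he.1
      · exact he.1
    -- matching bound : ncard (S' ∩ L) ≤ (S' ∩ VA).ncard + XM.ncard
    have hsub1 : (S' ∩ L).ncard ≤ (S' ∩ VA).ncard + XM.ncard := by
      have hP12 : S' ∩ L = {u | (u ∈ S' ∧ u ∈ L) ∧ m u ∈ S'} ∪ {u | (u ∈ S' ∧ u ∈ L) ∧ m u ∉ S'} := by
        ext u
        simp only [Set.mem_inter_iff, Set.mem_union, Set.mem_setOf_eq]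
        tauto
      have hb1 : {u | (u ∈ S' ∧ u ∈ L) ∧ m u ∈ S'}.ncard ≤ (S' ∩ VA).ncard := by
        apply Set.ncard_le_ncard_of_injOn m
        · rintro u ⟨⟨-, huL⟩, humS⟩
          exact ⟨humS, hmVA u huL⟩
        · exact hminj.mono (fun u hu => hu.1.2)
      have hb2 : {u | (u ∈ S' ∧ u ∈ L) ∧ m u ∉ S'}.ncard ≤ XM.ncard := by
        apply Set.ncard_le_ncard_of_injOn (fun u => (u, m u))
        · rintro u ⟨⟨huS, huL⟩, humS⟩
          exact ⟨⟨huS, humS, hmAdj u huL⟩, hmVA u huL⟩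
        · rintro u - u' - h
          exact congrArg Prod.fst h
      calc (S' ∩ L).ncard ≤ _ := by rw [hP12]; exact Set.ncard_union_le _ _
        _ ≤ (S' ∩ VA).ncard + XM.ncard := Nat.add_le_add hb1 hb2
    -- tree bound
    have hT'VT : T' ⊆ VT := Set.inter_subset_right
    have heq1 := pair_count T' VT H.Adj
    have hsplitDP : {e : V × V | e.1 ∈ T' ∧ e.2 ∈ VT ∧ H.Adj e.1 e.2}.ncard
        = {e : V × V | e.1 ∈ T' ∧ e.2 ∈ T' ∧ H.Adj e.1 e.2}.ncard + XT.ncard := by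
      have hXTeq : XT = {e : V × V | e.1 ∈ T' ∧ e.2 ∈ VT \ T' ∧ H.Adj e.1 e.2} := by
        ext ⟨a, b⟩
        simp only [hXT, hT', Set.mem_setOf_eq, Set.mem_inter_iff, Set.mem_diff]
        tauto
      rw [hXTeq]
      have hd : Disjoint {e : V × V | e.1 ∈ T' ∧ e.2 ∈ T' ∧ H.Adj e.1 e.2}
          {e : V × V | e.1 ∈ T' ∧ e.2 ∈ VT \ T' ∧ H.Adj e.1 e.2} := by
        rw [Set.disjoint_left]
        rintro e ⟨-, he2, -⟩ ⟨-, ⟨-, hne⟩, -⟩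
        exact hne he2
      rw [← Set.ncard_union_eq hd (Set.toFinite _) (Set.toFinite _)]
      congr 1
      ext ⟨a, b⟩
      simp only [Set.mem_union, Set.mem_setOf_eq, Set.mem_diff]
      constructor
      · rintro ⟨ha, hb, hadj⟩
        by_cases hbT : b ∈ T'
        · exact Or.inl ⟨ha, hbT, hadj⟩
        · exact Or.inr ⟨ha, ⟨hb, hbT⟩, hadj⟩
      · rintro (⟨ha, hb, hadj⟩ | ⟨ha, hb, hadj⟩)
        · exact ⟨ha, hT'VT hb, hadj⟩
        · exact ⟨ha, hb.1, hadj⟩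
    have htreebound := tree_pair_bound2 H VT htree T' hTne hT'VT
    -- degree sum over T'
    have hTsplit : (Set.toFinite T').toFinset
        = (Set.toFinite (T' ∩ L)).toFinset ∪ (Set.toFinite (T' \ L)).toFinset := by
      ext u
      simp only [Set.Finite.mem_toFinset, Finset.mem_union, Set.mem_inter_iff, Set.mem_diff]
      tauto
    have hTdisjf : Disjoint (Set.toFinite (T' ∩ L)).toFinset (Set.toFinite (T' \ L)).toFinset := by
      rw [Finset.disjoint_left]
      intro u hu hu2
      rw [Set.Finite.mem_toFinset] at hu hu2
      exact hu2.2 hu.2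
    have hsum1 := hsumleaf (T' ∩ L) Set.inter_subset_right
    have hsum2 := hIdeg (T' \ L) (by rw [hI]; exact fun u hu => ⟨hT'VT hu.1, hu.2⟩)
    have hsumsplit : (∑ v ∈ (Set.toFinite T').toFinset, {u | u ∈ VT ∧ H.Adj v u}.ncard)
        = (∑ v ∈ (Set.toFinite (T' ∩ L)).toFinset, {u | u ∈ VT ∧ H.Adj v u}.ncard)
          + (∑ v ∈ (Set.toFinite (T' \ L)).toFinset, {u | u ∈ VT ∧ H.Adj v u}.ncard) := by
      rw [hTsplit, Finset.sum_union hTdisjf]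
    have hTcard : T'.ncard = (T' ∩ L).ncard + (T' \ L).ncard := by
      have hd : Disjoint (T' ∩ L) (T' \ L) :=
        Set.disjoint_sdiff_right.mono_left Set.inter_subset_right
      rw [← Set.ncard_union_eq hd (Set.toFinite _) (Set.toFinite _), Set.inter_union_diff]
    have hSL : S' ∩ L = T' ∩ L := by
      ext u
      simp only [hT', Set.mem_inter_iff]
      exact ⟨fun ⟨h1, h2⟩ => ⟨⟨h1, hLsub h2⟩, h2⟩, fun ⟨⟨h1, _⟩, h2⟩ => ⟨h1, h2⟩⟩
    rw [hSL] at hsub1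
    -- combine everything with omega
    omega
  -- swap lemma
  have hswap : ∀ S' : Set V,
      {e : V × V | e.1 ∈ S'ᶜ ∧ e.2 ∉ S'ᶜ ∧ H.Adj e.1 e.2}.ncard
        = {e : V × V | e.1 ∈ S' ∧ e.2 ∉ S' ∧ H.Adj e.1 e.2}.ncard := by
    intro S'
    have himg : Prod.swap '' {e : V × V | e.1 ∈ S' ∧ e.2 ∉ S' ∧ H.Adj e.1 e.2}
        = {e : V × V | e.1 ∈ S'ᶜ ∧ e.2 ∉ S'ᶜ ∧ H.Adj e.1 e.2} := by
      ext ⟨a, b⟩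
      constructor
      · rintro ⟨⟨c, d⟩, ⟨h1, h2, h3⟩, heq⟩
        have ha : a = d := (congrArg Prod.fst heq).symm
        have hb : b = c := (congrArg Prod.snd heq).symm
        subst ha; subst hb
        exact ⟨h2, not_not_intro h1, h3.symm⟩
      · rintro ⟨h1, h2, h3⟩
        exact ⟨(b, a), ⟨not_not.mp h2, h1, h3.symm⟩, rfl⟩
    rw [← himg, Set.ncard_image_of_injective _ Prod.swap_injective]
  -- the main statement
  intro S hSne hScard
  set x := {e : V × V | e.1 ∈ S ∧ e.2 ∉ S ∧ H.Adj e.1 e.2}.ncard with hxdef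
  have hx0 : (0:ℝ) ≤ (x:ℝ) := Nat.cast_nonneg x
  have hs1 : 1 ≤ S.ncard := (Set.ncard_pos (Set.toFinite S)).mpr hSne
  have hcompl : S.ncard + Sᶜ.ncard = Fintype.card V := by
    rw [Set.ncard_add_ncard_compl S, Nat.card_eq_fintype_card]
  have hbba : (S ∩ VA).ncard + (Sᶜ ∩ VA).ncard = VA.ncard := by
    have hd : Disjoint (S ∩ VA) (Sᶜ ∩ VA) :=
      (disjoint_compl_right (a := S)).mono Set.inter_subset_left Set.inter_subset_left
    rw [← Set.ncard_union_eq hd (Set.toFinite _) (Set.toFinite _)]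
    congr 1
    ext u
    simp only [Set.mem_union, Set.mem_inter_iff, Set.mem_compl_iff]
    tauto
  -- the final real-arithmetic step, shared by both cases
  have final : ∀ (t b : ℕ), S.ncard ≤ t + b →
      α * (b : ℝ) ≤ (x : ℝ) → t ≤ 2 * x + 2 * b →
      0.01 * α * (S.ncard : ℝ) ≤ (x : ℝ) := by
    intro t b hstb hbx htx
    have hsreal : (S.ncard : ℝ) ≤ (t : ℝ) + (b : ℝ) := by exact_mod_cast hstb
    have htreal : (t : ℝ) ≤ 2 * (x : ℝ) + 2 * (b : ℝ) := by exact_mod_cast htx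
    have e0 : α * (S.ncard : ℝ) ≤ α * ((t : ℝ) + (b : ℝ)) :=
      mul_le_mul_of_nonneg_left hsreal hα.le
    have e1 : α * (t : ℝ) ≤ α * (2 * (x : ℝ) + 2 * (b : ℝ)) :=
      mul_le_mul_of_nonneg_left htreal hα.le
    have e2 : α * (x : ℝ) ≤ 3 * (x : ℝ) := mul_le_mul_of_nonneg_right hα3 hx0
    nlinarith [hbx, e0, e1, e2, hx0]
  by_cases hcase : 2 * (S ∩ VA).ncard ≤ VA.ncard
  · exact final (S ∩ VT).ncard (S ∩ VA).ncard (le_of_eq (hsplitcard S)) (keyA S hcase) (keyT S)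
  · have hcase2 : 2 * (Sᶜ ∩ VA).ncard ≤ VA.ncard := by omega
    have hxc : {e : V × V | e.1 ∈ Sᶜ ∧ e.2 ∉ Sᶜ ∧ H.Adj e.1 e.2}.ncard = x := hswap S
    have hA' := keyA Sᶜ hcase2
    have hT' := keyT Sᶜ
    rw [hxc] at hA' hT'
    refine final (Sᶜ ∩ VT).ncard (Sᶜ ∩ VA).ncard ?_ hA' hT'
    have := hsplitcard Sᶜ
    omega
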